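/- If Π: B → F is a morphism of double groupoids over the same lateral groupoids V and H and base P, then the double kernel Ker(Π) = {B ∈ B : Π(B) = Θ_p for some p ∈ P} is contained in the abelian group bundle K(B) of B, and is itself an abelian group bundle over P. -/
import Mathlib


/-- A (discrete) double groupoid: a set of boxes `B` with two compatible groupoid
structures, with horizontal edge groupoid `H` and vertical edge groupoid `V`,
both over a common base `P`. -/
structure DGpd (B : Type*) (V : Type*) (H : Type*) (P : Type*) where
  sV : V → P
  eV : V → P
  idV : P → V
  mulV : V → V → V
  invV : V → V
  sH : H → P
  eH : H → P
  idH : P → H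
  mulH : H → H → H
  invH : H → H
  t : B → H
  b : B → H
  l : B → V
  r : B → V
  corner_tl : ∀ A, sH (t A) = sV (l A)
  corner_tr : ∀ A, eH (t A) = sV (r A)
  corner_bl : ∀ A, sH (b A) = eV (l A)
  corner_br : ∀ A, eH (b A) = eV (r A)
  idh : V → B
  idv : H → B
  hc : B → B → B
  vc : B → B → B
  hi : B → B
  vi : B → B
  -- groupoid axioms for V
  sV_id : ∀ p, sV (idV p) = p
  eV_id : ∀ p, eV (idV p) = p
  sV_mul : ∀ g h, eV g = sV h → sV (mulV g h) = sV g
  eV_mul : ∀ g h, eV g = sV h → eV (mulV g h) = eV h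
  mulV_assoc : ∀ g h k, eV g = sV h → eV h = sV k →
    mulV (mulV g h) k = mulV g (mulV h k)
  idV_mul : ∀ g, mulV (idV (sV g)) g = g
  mulV_id : ∀ g, mulV g (idV (eV g)) = g
  sV_inv : ∀ g, sV (invV g) = eV g
  eV_inv : ∀ g, eV (invV g) = sV g
  mulV_inv : ∀ g, mulV g (invV g) = idV (sV g)
  invV_mul : ∀ g, mulV (invV g) g = idV (eV g)
  -- groupoid axioms for H
  sH_id : ∀ p, sH (idH p) = p
  eH_id : ∀ p, eH (idH p) = p
  sH_mul : ∀ x y, eH x = sH y → sH (mulH x y) = sH x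
  eH_mul : ∀ x y, eH x = sH y → eH (mulH x y) = eH y
  mulH_assoc : ∀ x y z, eH x = sH y → eH y = sH z →
    mulH (mulH x y) z = mulH x (mulH y z)
  idH_mul : ∀ x, mulH (idH (sH x)) x = x
  mulH_id : ∀ x, mulH x (idH (eH x)) = x
  sH_inv : ∀ x, sH (invH x) = eH x
  eH_inv : ∀ x, eH (invH x) = sH x
  mulH_inv : ∀ x, mulH x (invH x) = idH (sH x)
  invH_mul : ∀ x, mulH (invH x) x = idH (eH x)
  -- sides of identity boxes
  idh_t : ∀ g, t (idh g) = idH (sV g)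
  idh_b : ∀ g, b (idh g) = idH (eV g)
  idh_l : ∀ g, l (idh g) = g
  idh_r : ∀ g, r (idh g) = g
  idv_t : ∀ x, t (idv x) = x
  idv_b : ∀ x, b (idv x) = x
  idv_l : ∀ x, l (idv x) = idV (sH x)
  idv_r : ∀ x, r (idv x) = idV (eH x)
  -- horizontal groupoid structure on boxes (base V)
  hc_t : ∀ A B, r A = l B → t (hc A B) = mulH (t A) (t B)
  hc_b : ∀ A B, r A = l B → b (hc A B) = mulH (b A) (b B)
  hc_l : ∀ A B, r A = l B → l (hc A B) = l A
  hc_r : ∀ A B, r A = l B → r (hc A B) = r B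
  hc_assoc : ∀ A B C, r A = l B → r B = l C → hc (hc A B) C = hc A (hc B C)
  idh_hc : ∀ A, hc (idh (l A)) A = A
  hc_idh : ∀ A, hc A (idh (r A)) = A
  hi_l : ∀ A, l (hi A) = r A
  hi_r : ∀ A, r (hi A) = l A
  hi_t : ∀ A, t (hi A) = invH (t A)
  hi_b : ∀ A, b (hi A) = invH (b A)
  hc_hi : ∀ A, hc A (hi A) = idh (l A)
  hi_hc : ∀ A, hc (hi A) A = idh (r A)
  -- vertical groupoid structure on boxes (base H)
  vc_t : ∀ A B, b A = t B → t (vc A B) = t A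
  vc_b : ∀ A B, b A = t B → b (vc A B) = b B
  vc_l : ∀ A B, b A = t B → l (vc A B) = mulV (l A) (l B)
  vc_r : ∀ A B, b A = t B → r (vc A B) = mulV (r A) (r B)
  vc_assoc : ∀ A B C, b A = t B → b B = t C → vc (vc A B) C = vc A (vc B C)
  idv_vc : ∀ A, vc (idv (t A)) A = A
  vc_idv : ∀ A, vc A (idv (b A)) = A
  vi_t : ∀ A, t (vi A) = b A
  vi_b : ∀ A, b (vi A) = t A
  vi_l : ∀ A, l (vi A) = invV (l A)
  vi_r : ∀ A, r (vi A) = invV (r A)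
  vc_vi : ∀ A, vc A (vi A) = idv (t A)
  vi_vc : ∀ A, vc (vi A) A = idv (b A)
  -- the identity boxes are functorial
  idh_mulV : ∀ g h, eV g = sV h → vc (idh g) (idh h) = idh (mulV g h)
  idv_mulH : ∀ x y, eH x = sH y → hc (idv x) (idv y) = idv (mulH x y)
  id_id : ∀ p, idh (idV p) = idv (idH p)
  -- the interchange law
  interchange : ∀ K L M N, r K = l L → r M = l N → b K = t M → b L = t N →
    vc (hc K L) (hc M N) = hc (vc K M) (vc L N)

namespace DGpd

variable {B V H P : Type*} (D : DGpd B V H P)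

/-- The totally degenerate box at a point. -/
def Theta (p : P) : B := D.idh (D.idV p)

/-- A box all of whose four sides are identities at `p`; i.e. an element of the
fiber `K(B)_p` of the abelian group bundle `K(B)`. -/
def InFiber (p : P) (A : B) : Prop :=
  D.t A = D.idH p ∧ D.b A = D.idH p ∧ D.l A = D.idV p ∧ D.r A = D.idV p

/-- A box belonging to the core groupoid: its top and right sides are identities. -/
def IsCore (A : B) : Prop :=
  (∃ p, D.t A = D.idH p) ∧ (∃ p, D.r A = D.idV p)

/-- Source of the core groupoid: the bottom-left vertex. -/
def coreSrc (A : B) : P := D.sH (D.b A)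

/-- Target of the core groupoid: the top-right vertex. -/
def coreTgt (A : B) : P := D.eH (D.t A)

/-- Core multiplication `E ∘ F`. -/
def coreMul (E F : B) : B :=
  D.vc (D.hc (D.idh (D.l F)) F) (D.hc E (D.idv (D.b F)))

/-- Core inversion `E ↦ E^{(-1)} = (E ⋅ id_v(b(E)^{-1}))^v`. -/
def coreInv (E : B) : B := D.vi (D.hc E (D.idv (D.invH (D.b E))))

/-- The core action of the core groupoid on boxes:
`E ⊸ A = {(id l(A), A) over (E, id b(A))}`. -/
def coreAct (E A : B) : B :=
  D.vc (D.hc (D.idh (D.l A)) A) (D.hc E (D.idv (D.b A)))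

theorem Theta_t (p : P) : D.t (D.Theta p) = D.idH p := by
  rw [Theta, D.idh_t, D.sV_id]

theorem Theta_b (p : P) : D.b (D.Theta p) = D.idH p := by
  rw [Theta, D.idh_b, D.eV_id]

theorem Theta_l (p : P) : D.l (D.Theta p) = D.idV p := by
  rw [Theta, D.idh_l]

theorem Theta_r (p : P) : D.r (D.Theta p) = D.idV p := by
  rw [Theta, D.idh_r]

theorem Theta_eq_idv (p : P) : D.Theta p = D.idv (D.idH p) := D.id_id p

theorem mulV_id_id (p : P) : D.mulV (D.idV p) (D.idV p) = D.idV p := by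
  have := D.idV_mul (D.idV p)
  rwa [D.sV_id] at this

theorem fiber_vc_eq_hc (p : P) (A A' : B)
    (hA : D.InFiber p A) (hA' : D.InFiber p A') : D.vc A A' = D.hc A A' := by
  obtain ⟨ht, hb, hl, hr⟩ := hA
  obtain ⟨ht', hb', hl', hr'⟩ := hA'
  have e1 : D.hc A (D.Theta p) = A := by
    have := D.hc_idh A; rwa [hr] at this
  have e2 : D.hc (D.Theta p) A' = A' := by
    have := D.idh_hc A'; rwa [hl'] at this
  have e3 : D.vc A (D.Theta p) = A := by
    have := D.vc_idv A; rw [hb] at this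
    rwa [Theta, D.id_id]
  have e4 : D.vc (D.Theta p) A' = A' := by
    have := D.idv_vc A'; rw [ht'] at this
    rwa [Theta, D.id_id]
  have I := D.interchange A (D.Theta p) (D.Theta p) A'
    (by rw [hr, D.Theta_l]) (by rw [D.Theta_r, hl'])
    (by rw [hb, D.Theta_t]) (by rw [D.Theta_b, ht'])
  rw [e1, e2, e3, e4] at I
  exact I

theorem fiber_vc_comm (p : P) (A A' : B)
    (hA : D.InFiber p A) (hA' : D.InFiber p A') : D.vc A A' = D.vc A' A := by
  obtain ⟨ht, hb, hl, hr⟩ := hA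
  obtain ⟨ht', hb', hl', hr'⟩ := hA'
  have e1 : D.hc (D.Theta p) A = A := by
    have := D.idh_hc A; rwa [hl] at this
  have e2 : D.hc A' (D.Theta p) = A' := by
    have := D.hc_idh A'; rwa [hr'] at this
  have e3 : D.vc (D.Theta p) A' = A' := by
    have := D.idv_vc A'; rw [ht'] at this
    rwa [Theta, D.id_id]
  have e4 : D.vc A (D.Theta p) = A := by
    have := D.vc_idv A; rw [hb] at this
    rwa [Theta, D.id_id]
  have I := D.interchange (D.Theta p) A A' (D.Theta p)
    (by rw [D.Theta_r, hl]) (by rw [hr', D.Theta_l])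
    (by rw [D.Theta_b, ht']) (by rw [hb, D.Theta_t])
  rw [e1, e2, e3, e4] at I
  rw [I, D.fiber_vc_eq_hc p A' A ⟨ht', hb', hl', hr'⟩ ⟨ht, hb, hl, hr⟩]

theorem invV_id (p : P) : D.invV (D.idV p) = D.idV p := by
  have h1 := D.idV_mul (D.invV (D.idV p))
  rw [D.sV_inv, D.eV_id] at h1
  have h2 := D.mulV_inv (D.idV p)
  rw [D.sV_id] at h2
  rw [← h1, h2]

end DGpd

section Stmt3

variable {B F V H P : Type*}

/-- `Π : B → F` is a morphism of double groupoids over the same lateral groupoids. -/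
def IsDGpdHom (D1 : DGpd B V H P) (D2 : DGpd F V H P) (Pi : B → F) : Prop :=
  (∀ A, D2.t (Pi A) = D1.t A) ∧ (∀ A, D2.b (Pi A) = D1.b A) ∧
  (∀ A, D2.l (Pi A) = D1.l A) ∧ (∀ A, D2.r (Pi A) = D1.r A) ∧
  (∀ A A', D1.r A = D1.l A' → Pi (D1.hc A A') = D2.hc (Pi A) (Pi A')) ∧
  (∀ A A', D1.b A = D1.t A' → Pi (D1.vc A A') = D2.vc (Pi A) (Pi A')) ∧
  (∀ g : V, Pi (D1.idh g) = D2.idh g) ∧ (∀ x : H, Pi (D1.idv x) = D2.idv x)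

/-- The double kernel of a morphism of double groupoids. -/
def InDKer (D2 : DGpd F V H P) (Pi : B → F) (A : B) : Prop :=
  ∃ p : P, Pi A = D2.Theta p

/-- The double kernel of a morphism of double groupoids is contained in
the abelian group bundle `K(B)` associated to `B`, and is itself an abelian group bundle
over `P`: every kernel element lies in some fiber `K(B)_p`, each fiber of the kernel
contains `Θ_p`, and is closed under the (commutative) composition and under inverses. -/
theorem dker_sub_bundle_and_abelian_bundle
    (D1 : DGpd B V H P) (D2 : DGpd F V H P) (Pi : B → F)
    (hPi : IsDGpdHom D1 D2 Pi) :
    (∀ A, InDKer D2 Pi A → ∃ p, D1.InFiber p A) ∧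
    (∀ p : P, InDKer D2 Pi (D1.Theta p)) ∧
    (∀ p A A', InDKer D2 Pi A → InDKer D2 Pi A' →
      D1.InFiber p A → D1.InFiber p A' →
      InDKer D2 Pi (D1.vc A A') ∧ D1.InFiber p (D1.vc A A') ∧
        D1.vc A A' = D1.vc A' A ∧ D1.vc A A' = D1.hc A A') ∧
    (∀ p A, InDKer D2 Pi A → D1.InFiber p A →
      InDKer D2 Pi (D1.vi A) ∧ D1.InFiber p (D1.vi A) ∧
        D1.vc A (D1.vi A) = D1.Theta p) := by
  obtain ⟨ht, hb, hl, hr, hhc, hvc, hidh, hidv⟩ := hPi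
  -- relations between the identity assignments of D1 and D2
  have hidHrel : ∀ g : V, D2.idH (D2.sV g) = D1.idH (D1.sV g) := by
    intro g
    have := ht (D1.idh g)
    rwa [hidh, D2.idh_t, D1.idh_t] at this
  have hidVrel : ∀ x : H, D2.idV (D2.sH x) = D1.idV (D1.sH x) := by
    intro x
    have := hl (D1.idv x)
    rwa [hidv, D2.idv_l, D1.idv_l] at this
  refine ⟨?_, ?_, ?_, ?_⟩
  · -- kernel ⊆ K(B)
    rintro A ⟨p, hA⟩
    set q := D1.sV (D2.idV p) with hq
    have hH : D2.idH p = D1.idH q := by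
      have := hidHrel (D2.idV p)
      rwa [D2.sV_id] at this
    have hV : D2.idV p = D1.idV q := by
      have := hidVrel (D2.idH p)
      rw [D2.sH_id, hH, D1.sH_id] at this
      exact this
    refine ⟨q, ?_, ?_, ?_, ?_⟩
    · rw [← ht A, hA, D2.Theta_t, hH]
    · rw [← hb A, hA, D2.Theta_b, hH]
    · rw [← hl A, hA, D2.Theta_l, hV]
    · rw [← hr A, hA, D2.Theta_r, hV]
  · -- Θ_p is in the kernel
    intro p
    refine ⟨D2.sH (D1.idH p), ?_⟩
    have hV : D1.idV p = D2.idV (D2.sH (D1.idH p)) := by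
      have := hidVrel (D1.idH p)
      rw [D1.sH_id] at this
      exact this.symm
    rw [DGpd.Theta, hidh, hV, DGpd.Theta]
  · -- closure under composition, commutativity, vc = hc
    intro p A A' hKA hKA' hFA hFA'
    obtain ⟨htA, hbA, hlA, hrA⟩ := hFA
    obtain ⟨htA', hbA', hlA', hrA'⟩ := hFA'
    have hcond : D1.b A = D1.t A' := by rw [hbA, htA']
    obtain ⟨q, hq⟩ := hKA
    obtain ⟨q', hq'⟩ := hKA'
    have hqq' : q = q' := by
      have h1 : D2.idH q = D1.idH p := by
        have := ht A; rw [hq, D2.Theta_t, htA] at this; exact this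
      have h2 : D2.idH q' = D1.idH p := by
        have := ht A'; rw [hq', D2.Theta_t, htA'] at this; exact this
      have h3 : D2.idH q = D2.idH q' := by rw [h1, h2]
      have := congrArg D2.sH h3
      rwa [D2.sH_id, D2.sH_id] at this
    subst hqq'
    refine ⟨⟨q, ?_⟩, ⟨?_, ?_, ?_, ?_⟩, ?_, ?_⟩
    · rw [hvc A A' hcond, hq, hq', DGpd.Theta,
        D2.idh_mulV _ _ (by rw [D2.eV_id, D2.sV_id]), D2.mulV_id_id]
    · rw [D1.vc_t A A' hcond, htA]
    · rw [D1.vc_b A A' hcond, hbA']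
    · rw [D1.vc_l A A' hcond, hlA, hlA', D1.mulV_id_id]
    · rw [D1.vc_r A A' hcond, hrA, hrA', D1.mulV_id_id]
    · exact D1.fiber_vc_comm p A A' ⟨htA, hbA, hlA, hrA⟩ ⟨htA', hbA', hlA', hrA'⟩
    · exact D1.fiber_vc_eq_hc p A A' ⟨htA, hbA, hlA, hrA⟩ ⟨htA', hbA', hlA', hrA'⟩
  · -- closure under inversion
    intro p A hKA hFA
    obtain ⟨htA, hbA, hlA, hrA⟩ := hFA
    obtain ⟨q, hq⟩ := hKA
    have hH : D2.idH q = D1.idH p := by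
      have := ht A; rw [hq, D2.Theta_t, htA] at this; exact this
    have hviFiber : D1.InFiber p (D1.vi A) := by
      refine ⟨?_, ?_, ?_, ?_⟩
      · rw [D1.vi_t, hbA]
      · rw [D1.vi_b, htA]
      · rw [D1.vi_l, hlA, D1.invV_id]
      · rw [D1.vi_r, hrA, D1.invV_id]
    have hvcvi : D1.vc A (D1.vi A) = D1.Theta p := by
      rw [D1.vc_vi, htA, DGpd.Theta, D1.id_id]
    refine ⟨⟨q, ?_⟩, hviFiber, hvcvi⟩
    -- Π(vi A) = Θ_q in D2
    have hX : D2.vc (D2.Theta q) (Pi (D1.vi A)) = D2.Theta q := by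
      have h := hvc A (D1.vi A) (D1.vi_t A).symm
      rw [hvcvi, hq] at h
      rw [← h, DGpd.Theta, hidh]
      have hV : D1.idV p = D2.idV q := by
        have := hidVrel (D2.idH q)
        rw [D2.sH_id, hH, D1.sH_id] at this
        exact this.symm
      rw [hV, DGpd.Theta]
    have htX : D2.t (Pi (D1.vi A)) = D2.idH q := by
      rw [ht, D1.vi_t, hbA, hH]
    have h2 := D2.idv_vc (Pi (D1.vi A))
    rw [htX] at h2
    rw [← h2, ← D2.id_id, ← DGpd.Theta, hX]

end Stmt3
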